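/- Lemma 3.3 (per-edge characterization of discrete conformal vector fields, hyperbolic case). Let γ_i, γ_j : ℝ → ℝ³ be curves with γ_i(t) ∈ ℍ² and γ_j(t) ∈ ℍ² for all t, differentiable at t = 0 with derivatives ξ_i := γ_i′(0) and ξ_j := γ_j′(0). Set p_i := γ_i(0), p_j := γ_j(0), assume p_i ≠ p_j, set λ_0 := arcosh(−⟨p_i,p_j⟩_M), and let u_i, u_j ∈ ℝ. Then the hyperbolic edge length function t ↦ arcosh(−⟨γ_i(t), γ_j(t)⟩_M) has derivative (u_i + u_j)·tanh(λ_0/2) at t = 0 if and only if ⟨ξ_j − ξ_i, p_j − p_i⟩_M = ((u_i + u_j)/2)·⟨p_j − p_i, p_j − p_i⟩_M. -/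

import Mathlib

noncomputable section

/-- Minkowski inner product on `ℝ³` (signature `(−,+,+)`). -/
def mink (x y : Fin 3 → ℝ) : ℝ := -(x 0 * y 0) + x 1 * y 1 + x 2 * y 2

/-- The hyperboloid model of the hyperbolic plane. -/
def inH2 (x : Fin 3 → ℝ) : Prop := mink x x = -1 ∧ 0 < x 0

/-- Inverse hyperbolic cosine. -/
def arcosh (x : ℝ) : ℝ := Real.log (x + Real.sqrt (x ^ 2 - 1))

lemma mink_hasDerivAt {f g : ℝ → Fin 3 → ℝ} {f' g' : Fin 3 → ℝ} {t : ℝ}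
    (hf : HasDerivAt f f' t) (hg : HasDerivAt g g' t) :
    HasDerivAt (fun s => mink (f s) (g s)) (mink f' (g t) + mink (f t) g') t := by
  have hfi : ∀ i, HasDerivAt (fun s => f s i) (f' i) t := fun i => hasDerivAt_pi.mp hf i
  have hgi : ∀ i, HasDerivAt (fun s => g s i) (g' i) t := fun i => hasDerivAt_pi.mp hg i
  unfold mink
  have := (((hfi 0).mul (hgi 0)).neg.add ((hfi 1).mul (hgi 1))).add ((hfi 2).mul (hgi 2))
  exact this.congr_deriv (by ring)

lemma one_lt_neg_mink {p q : Fin 3 → ℝ} (hp : inH2 p) (hq : inH2 q) (hne : p ≠ q) :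
    1 < -(mink p q) := by
  obtain ⟨hp1, hp0⟩ := hp
  obtain ⟨hq1, hq0⟩ := hq
  simp only [mink] at hp1 hq1 ⊢
  by_contra h
  push_neg at h
  -- so p0*q0 - p1*q1 - p2*q2 ≤ 1
  have hs : p 0 * q 0 ≤ 1 + (p 1 * q 1 + p 2 * q 2) := by nlinarith
  have hpos : (0:ℝ) < 1 + (p 1 * q 1 + p 2 * q 2) :=
    lt_of_lt_of_le (mul_pos hp0 hq0) hs
  have hsq : (p 0 * q 0) ^ 2 ≤ (1 + (p 1 * q 1 + p 2 * q 2)) ^ 2 := by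
    have := mul_pos hp0 hq0
    nlinarith
  have e1 : p 0 ^ 2 = 1 + p 1 ^ 2 + p 2 ^ 2 := by linear_combination -hp1
  have e2 : q 0 ^ 2 = 1 + q 1 ^ 2 + q 2 ^ 2 := by linear_combination -hq1
  have key : (p 1 - q 1) ^ 2 + (p 2 - q 2) ^ 2 + (p 1 * q 2 - p 2 * q 1) ^ 2
      = (p 0 * q 0) ^ 2 - (1 + (p 1 * q 1 + p 2 * q 2)) ^ 2 := by
    linear_combination -(q 0 ^ 2) * e1 - (1 + p 1 ^ 2 + p 2 ^ 2) * e2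
  have hsum : (p 1 - q 1) ^ 2 + (p 2 - q 2) ^ 2 + (p 1 * q 2 - p 2 * q 1) ^ 2 ≤ 0 := by
    rw [key]; linarith
  have s1 := sq_nonneg (p 1 - q 1)
  have s2 := sq_nonneg (p 2 - q 2)
  have s3 := sq_nonneg (p 1 * q 2 - p 2 * q 1)
  have hz1 : (p 1 - q 1) ^ 2 = 0 := by linarith
  have hz2 : (p 2 - q 2) ^ 2 = 0 := by linarith
  have h1 : p 1 = q 1 := by have := sq_eq_zero_iff.mp hz1; linarith
  have h2 : p 2 = q 2 := by have := sq_eq_zero_iff.mp hz2; linarith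
  have h0 : p 0 = q 0 := by
    have hsq0 : (p 0 - q 0) * (p 0 + q 0) = 0 := by
      linear_combination e1 - e2 + (p 1 + q 1) * h1 + (p 2 + q 2) * h2
    rcases mul_eq_zero.mp hsq0 with h' | h'
    · linarith
    · linarith
  apply hne
  funext i
  fin_cases i <;> assumption

lemma hasDerivAt_arcosh {x : ℝ} (hx : 1 < x) :
    HasDerivAt arcosh (1 / Real.sqrt (x ^ 2 - 1)) x := by
  have hpos : 0 < x ^ 2 - 1 := by nlinarith
  set s := Real.sqrt (x ^ 2 - 1) with hs
  have hspos : 0 < s := Real.sqrt_pos.mpr hpos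
  have hssq : s ^ 2 = x ^ 2 - 1 := Real.sq_sqrt (le_of_lt hpos)
  have h1 : HasDerivAt (fun y : ℝ => y ^ 2 - 1) (2 * x) x := by
    simpa using ((hasDerivAt_pow 2 x).sub_const 1)
  have h2 : HasDerivAt (fun y : ℝ => Real.sqrt (y ^ 2 - 1)) (1 / (2 * s) * (2 * x)) x :=
    (Real.hasDerivAt_sqrt (ne_of_gt hpos)).comp x h1
  have h3 : HasDerivAt (fun y : ℝ => y + Real.sqrt (y ^ 2 - 1)) (1 + 1 / (2 * s) * (2 * x)) x :=
    (hasDerivAt_id x).add h2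
  have hgx : 0 < x + s := by linarith
  have h4 : HasDerivAt (fun y : ℝ => Real.log (y + Real.sqrt (y ^ 2 - 1)))
      ((x + s)⁻¹ * (1 + 1 / (2 * s) * (2 * x))) x :=
    HasDerivAt.comp (h₂ := Real.log) x (Real.hasDerivAt_log (ne_of_gt hgx)) h3
  have heq : (x + s)⁻¹ * (1 + 1 / (2 * s) * (2 * x)) = 1 / s := by
    field_simp
    ring
  rw [heq] at h4
  exact h4

/-- Lemma 3.3 (hyperbolic case): a tangent vector field on the two endpoints of a hyperbolic
edge induces a discretely conformal (vertex scaling) change of the edge length with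
conformal factors `u_i, u_j` iff
`⟨ξ_j − ξ_i, p_j − p_i⟩_M = ((u_i + u_j)/2)·⟨p_j − p_i, p_j − p_i⟩_M`. -/
theorem hyp_discrete_conformal_char
    (γi γj : ℝ → Fin 3 → ℝ)
    (hγi : ∀ t, inH2 (γi t)) (hγj : ∀ t, inH2 (γj t))
    (ξi ξj : Fin 3 → ℝ)
    (hdi : HasDerivAt γi ξi 0) (hdj : HasDerivAt γj ξj 0)
    (hne : γi 0 ≠ γj 0)
    (ui uj : ℝ) :
    HasDerivAt (fun t => arcosh (-(mink (γi t) (γj t))))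
        ((ui + uj) * Real.tanh (arcosh (-(mink (γi 0) (γj 0))) / 2)) 0 ↔
      mink (ξj - ξi) (γj 0 - γi 0)
        = ((ui + uj) / 2) * mink (γj 0 - γi 0) (γj 0 - γi 0) := by
  set c0 : ℝ := -(mink (γi 0) (γj 0)) with hc0def
  have hc0 : 1 < c0 := one_lt_neg_mink (hγi 0) (hγj 0) hne
  have hpos : 0 < c0 ^ 2 - 1 := by nlinarith
  set s : ℝ := Real.sqrt (c0 ^ 2 - 1) with hsdef
  have hspos : 0 < s := Real.sqrt_pos.mpr hpos
  have hssq : s ^ 2 = c0 ^ 2 - 1 := Real.sq_sqrt (le_of_lt hpos)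
  -- derivative of c(t) = -(mink (γi t) (γj t))
  set m : ℝ := -(mink ξi (γj 0) + mink (γi 0) ξj) with hmdef
  have hc : HasDerivAt (fun t => -(mink (γi t) (γj t))) m 0 :=
    (mink_hasDerivAt hdi hdj).neg
  have hF : HasDerivAt (fun t => arcosh (-(mink (γi t) (γj t)))) (1 / s * m) 0 :=
    HasDerivAt.comp (h₂ := arcosh) 0 (hasDerivAt_arcosh hc0) hc
  -- orthogonality
  have horthoi : mink ξi (γi 0) + mink (γi 0) ξi = 0 := by
    have hconst : HasDerivAt (fun t => mink (γi t) (γi t)) 0 0 := by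
      have : (fun t => mink (γi t) (γi t)) = fun _ => (-1 : ℝ) := funext fun t => (hγi t).1
      rw [this]; exact hasDerivAt_const 0 (-1)
    exact ((mink_hasDerivAt hdi hdi).unique hconst)
  have horthoj : mink ξj (γj 0) + mink (γj 0) ξj = 0 := by
    have hconst : HasDerivAt (fun t => mink (γj t) (γj t)) 0 0 := by
      have : (fun t => mink (γj t) (γj t)) = fun _ => (-1 : ℝ) := funext fun t => (hγj t).1
      rw [this]; exact hasDerivAt_const 0 (-1)
    exact ((mink_hasDerivAt hdj hdj).unique hconst)
  -- algebraic identities for the RHS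
  have hA : mink (ξj - ξi) (γj 0 - γi 0) = m := by
    rw [hmdef]
    simp only [mink, Pi.sub_apply] at horthoi horthoj ⊢
    linear_combination horthoi / 2 + horthoj / 2
  have hB : mink (γj 0 - γi 0) (γj 0 - γi 0) = 2 * (c0 - 1) := by
    have h1 := (hγi 0).1
    have h2 := (hγj 0).1
    rw [hc0def]
    simp only [inH2, mink, Pi.sub_apply] at h1 h2 ⊢
    linear_combination h1 + h2
  -- tanh value
  have htanh : Real.tanh (arcosh c0 / 2) = s / (1 + c0) := by
    set t := arcosh c0 / 2 with ht
    have hE2 : Real.exp t ^ 2 = c0 + s := by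
      have : Real.exp t ^ 2 = Real.exp (2 * t) := by
        rw [← Real.exp_nat_mul]; norm_num
      rw [this]
      have h2t : 2 * t = Real.log (c0 + s) := by
        rw [ht]; unfold arcosh; ring
      rw [h2t, Real.exp_log (by linarith)]
    have hEpos : 0 < Real.exp t := Real.exp_pos t
    rw [Real.tanh_eq_sinh_div_cosh, Real.sinh_eq, Real.cosh_eq, Real.exp_neg]
    rw [div_eq_div_iff (by positivity) (by positivity)]
    field_simp
    nlinarith [hE2, hssq, hEpos, hspos]
  rw [hA, hB, htanh]
  constructor
  · intro h
    have heq := h.unique hF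
    -- (ui+uj) * (s/(1+c0)) = 1/s * m
    have h1c0 : (0:ℝ) < 1 + c0 := by linarith
    field_simp at heq
    have h2 : m * (1 + c0) = (ui + uj) * (c0 - 1) * (1 + c0) := by
      linear_combination -heq + (ui + uj) * hssq
    have h3 : m = (ui + uj) * (c0 - 1) := mul_right_cancel₀ (ne_of_gt h1c0) h2
    linear_combination h3
  · intro h
    have heq : (ui + uj) * (s / (1 + c0)) = 1 / s * m := by
      rw [h]
      have h1c0 : (1:ℝ) + c0 ≠ 0 := by positivity
      have hs0 : s ≠ 0 := ne_of_gt hspos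
      field_simp
      linear_combination (ui + uj) * hssq + (ui + uj) * (c0 - mink (γi 0) (γj 0)) * hc0def
    rw [heq]
    exact hF
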